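/- Let ε > 0 and r ∈ (0,1), and set δ = min{ε/3, εr/4}. Then for every n ≥ 1 and all positive matrices A, B ∈ M_n(ℂ) satisfying: (i) tr(P_{ker(B)}) ≥ r, where P_{ker(B)} is the orthogonal projection onto the kernel of B; (ii) tr(B) ≤ tr(A) + δ; (iii) ∫_0^t λ_A(s) ds ≤ δt + ∫_0^t λ_B(s) ds for all t ∈ [0, 1 − tr(P_{ker(B)})]; and (iv) ∫_0^t λ_A(s) ds ≤ δt + ε(t − (1 − tr(P_{ker(B)}))) + ∫_0^t λ_B(s) ds for all t ∈ [1 − tr(P_{ker(B)}), 1]; there exists a self-adjoint matrix B' ∈ M_n(ℂ) such that ‖B' − B‖ < 2ε and A ≺_tr B'. -/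

import Mathlib

open scoped Matrix Matrix.Norms.L2Operator ComplexOrder

/-- Eigenvalues of a Hermitian matrix listed in non-increasing order. -/
noncomputable def sortedEigs {m : ℕ} {A : Matrix (Fin m) (Fin m) ℂ}
    (hA : A.IsHermitian) : Fin m → ℝ :=
  fun i => hA.eigenvalues (Tuple.sort hA.eigenvalues i.rev)

/-- `Maj hA hB` means `A ≺_tr B`. -/
def Maj {m : ℕ} {A B : Matrix (Fin m) (Fin m) ℂ}
    (hA : A.IsHermitian) (hB : B.IsHermitian) : Prop :=
  (∀ l : Fin m, ∑ k ∈ Finset.Iic l, sortedEigs hA k ≤ ∑ k ∈ Finset.Iic l, sortedEigs hB k) ∧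
  (∑ k, sortedEigs hA k = ∑ k, sortedEigs hB k)

/-- The eigenvalue function `λ_A(s) = α_{⌊ms⌋+1}`. -/
noncomputable def eigFun {m : ℕ} {A : Matrix (Fin m) (Fin m) ℂ}
    (hA : A.IsHermitian) (s : ℝ) : ℝ :=
  if h : (⌊(m : ℝ) * s⌋).toNat < m then sortedEigs hA ⟨(⌊(m : ℝ) * s⌋).toNat, h⟩ else 0

/-- The normalized trace of a self-adjoint matrix. -/
noncomputable def ntr {m : ℕ} (A : Matrix (Fin m) (Fin m) ℂ) : ℝ :=
  (Matrix.trace A).re / m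

section Aux
open Finset MeasureTheory intervalIntegral Polynomial


lemma discrete_core (n k : ℕ) (ε δ : ℝ) (α β : ℕ → ℝ)
    (hkn : k < n) (hδ0 : 0 ≤ δ) (hδε : δ < ε)
    (hnum : 2 * (δ * n) ≤ ε * ((n : ℝ) - k))
    (hα0 : ∀ l < n, 0 ≤ α l)
    (H1 : ∀ l ≤ k, ∑ i ∈ range l, α i ≤ δ * l + ∑ i ∈ range l, β i)
    (H2 : ∀ l, k ≤ l → l ≤ n → ∑ i ∈ range l, α i ≤ δ * l + ε * ((l : ℝ) - k) + ∑ i ∈ range k, β i)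
    (H3 : ∑ i ∈ range k, β i ≤ ∑ i ∈ range n, α i + δ * n) :
    ∃ μ : ℕ → ℝ,
      (∀ l ≤ n, ∑ i ∈ range l, α i ≤ ∑ i ∈ range l, μ i) ∧
      (∑ i ∈ range n, μ i = ∑ i ∈ range n, α i) ∧
      (∀ i < k, |μ i - β i| ≤ δ + ε) ∧ (∀ i, k ≤ i → i < n → |μ i| ≤ δ + ε) := by
  have hε0 : (0:ℝ) < ε := lt_of_le_of_lt hδ0 hδε
  have F0 : (0:ℝ) < (n:ℝ) - k := by
    have : (k:ℝ) < n := by exact_mod_cast hkn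
    linarith
  set Sβk := ∑ i ∈ range k, β i with hSβk
  set a : ℕ → ℝ := fun j => (∑ i ∈ range j, α i) - Sβk - δ * j with ha
  have ha_ub : ∀ j, k ≤ j → j ≤ n → a j ≤ ε * ((j:ℝ) - k) := by
    intro j hjk hjn
    have := H2 j hjk hjn
    simp only [ha]
    linarith
  have ha_lb_n : -(ε * ((n:ℝ) - k)) ≤ a n := by
    have han : a n = (∑ i ∈ range n, α i) - Sβk - δ * n := rfl
    rw [han]; linarith
  set T : ℕ → ℝ := fun l =>
    (insert n (Icc l n)).sup' (insert_nonempty _ _) (fun j => a j - ε * ((j:ℝ) - l)) with hT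
  set lam : ℕ → ℝ := fun l => a n * (((l:ℝ) - k) / ((n:ℝ) - k)) with hlam
  set Th : ℕ → ℝ := fun l => max (T l) (lam l) with hTh
  have hThdef : ∀ l, Th l = max (T l) (lam l) := fun _ => rfl
  have hlamdef : ∀ l : ℕ, lam l = a n * (((l:ℝ) - k) / ((n:ℝ) - k)) := fun _ => rfl
  have hmemself : ∀ l, l ≤ n → l ∈ insert n (Icc l n) := by
    intro l hl; exact mem_insert_of_mem (mem_Icc.mpr ⟨le_refl _, hl⟩)
  have FT_ge : ∀ l, l ≤ n → a l ≤ T l := by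
    intro l hl
    have h : a l - ε * ((l:ℝ) - (l:ℝ)) ≤ T l :=
      Finset.le_sup' (fun j => a j - ε * ((j:ℝ) - (l:ℝ))) (hmemself l hl)
    linarith [h]
  have hmem_le : ∀ {l j : ℕ}, j ∈ insert n (Icc l n) → l ≤ n → l ≤ j ∧ j ≤ n := by
    intro l j hj hl
    rcases mem_insert.mp hj with h | h
    · exact ⟨h ▸ hl, le_of_eq h⟩
    · exact ⟨(mem_Icc.mp h).1, (mem_Icc.mp h).2⟩
  have FT_le : ∀ l, l ≤ n → ∀ c : ℝ, (∀ j, l ≤ j → j ≤ n → a j - ε * ((j:ℝ) - l) ≤ c) → T l ≤ c := by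
    intro l hl c hc
    apply Finset.sup'_le
    intro j hj
    obtain ⟨h1, h2⟩ := hmem_le hj hl
    exact hc j h1 h2
  have FTk : T k ≤ 0 := by
    apply FT_le k (le_of_lt hkn)
    intro j h1 h2
    have := ha_ub j h1 h2
    linarith
  have hlamk : lam k = 0 := by rw [hlamdef]; simp
  have FThk : Th k = 0 := by rw [hThdef, hlamk]; exact max_eq_right FTk
  have FTn : T n = a n := by
    apply le_antisymm
    · apply FT_le n (le_refl n)
      intro j h1 h2
      have hj : j = n := le_antisymm h2 h1
      subst hj
      simp
    · have := FT_ge n (le_refl n); linarith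
  have hlamn : lam n = a n := by
    rw [hlamdef, div_self (ne_of_gt F0)]; ring
  have FThn : Th n = a n := by rw [hThdef, FTn, hlamn, max_self]
  have hdlam : ∀ l : ℕ, lam (l+1) - lam l = a n / ((n:ℝ) - k) := by
    intro l
    rw [hlamdef, hlamdef]
    push_cast
    ring
  have hdlam_ub : a n / ((n:ℝ) - k) ≤ ε := by
    rw [div_le_iff₀ F0]
    have := ha_ub n (le_of_lt hkn) (le_refl n)
    linarith [this]
  have hdlam_lb : -ε ≤ a n / ((n:ℝ) - k) := by
    rw [le_div_iff₀ F0]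
    linarith [ha_lb_n]
  have FTh_ub : ∀ i, i < n → Th (i+1) ≤ Th i + ε := by
    intro i hi
    have hTub : T (i+1) ≤ T i + ε := by
      apply FT_le (i+1) hi
      intro j h1 h2
      have hji : i ≤ j := le_trans (Nat.le_succ i) h1
      have hterm : a j - ε * ((j:ℝ) - (i:ℝ)) ≤ T i :=
        Finset.le_sup' (fun j => a j - ε * ((j:ℝ) - (i:ℝ)))
          (mem_insert_of_mem (mem_Icc.mpr ⟨hji, h2⟩))
      push_cast
      linarith
    have hlub : lam (i+1) ≤ lam i + ε := by
      have := hdlam i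
      linarith [hdlam_ub]
    rw [hThdef (i+1), hThdef i]
    apply max_le
    · exact le_trans hTub (by linarith [le_max_left (T i) (lam i)])
    · exact le_trans hlub (by linarith [le_max_right (T i) (lam i)])
  have FTh_lb : ∀ i, i < n → Th i - ε ≤ Th (i+1) := by
    intro i hi
    have hi1 : i + 1 ≤ n := hi
    have hTlb : T i - ε ≤ T (i+1) := by
      obtain ⟨j0, hj0mem, hj0⟩ := Finset.exists_mem_eq_sup' (insert_nonempty n (Icc i n))
        (fun j => a j - ε * ((j:ℝ) - (i:ℝ)))
      have hj0' : T i = a j0 - ε * ((j0:ℝ) - (i:ℝ)) := hj0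
      obtain ⟨hij0, hj0n⟩ := hmem_le hj0mem (le_of_lt hi)
      rcases Nat.lt_or_ge i j0 with hlt | hge
      · have hterm : a j0 - ε * ((j0:ℝ) - ((i:ℕ)+1:ℕ)) ≤ T (i+1) :=
          Finset.le_sup' (fun j => a j - ε * ((j:ℝ) - (((i:ℕ)+1:ℕ):ℝ)))
            (mem_insert_of_mem (mem_Icc.mpr ⟨hlt, hj0n⟩))
        push_cast at hterm
        linarith
      · have hj0i : j0 = i := le_antisymm hge hij0
        rw [hj0i] at hj0'
        have h3 : a (i+1) ≤ T (i+1) := FT_ge _ hi1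
        have h4 : a (i+1) = a i + α i - δ := by
          simp only [ha, sum_range_succ]
          push_cast
          ring
        have h5 := hα0 i hi
        have h6 : T i = a i := by rw [hj0']; ring
        linarith
    have hllb : lam i - ε ≤ lam (i+1) := by
      have := hdlam i
      linarith [hdlam_lb]
    rw [hThdef (i+1), hThdef i, ← max_sub_sub_right]
    exact max_le_max hTlb hllb
  set μ : ℕ → ℝ := fun i => if i < k then β i + δ else δ + (Th (i+1) - Th i) with hμ
  have hSμhead : ∀ l, l ≤ k → ∑ i ∈ range l, μ i = (∑ i ∈ range l, β i) + δ * l := by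
    intro l hl
    have hc : ∀ i ∈ range l, μ i = β i + δ := by
      intro i hi
      have : i < k := lt_of_lt_of_le (mem_range.mp hi) hl
      simp [hμ, this]
    rw [sum_congr rfl hc, sum_add_distrib]
    simp [mul_comm]
  have htel : ∀ m : ℕ, ∑ i ∈ range m, (Th (i+1) - Th i) = Th m - Th 0 := fun m => sum_range_sub Th m
  have hSμtail : ∀ l, k ≤ l → ∑ i ∈ range l, μ i = Sβk + δ * l + Th l := by
    intro l hl
    rw [← sum_range_add_sum_Ico μ hl]
    have h1 : ∑ i ∈ range k, μ i = Sβk + δ * k := hSμhead k (le_refl k)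
    have h2 : ∀ i ∈ Ico k l, μ i = δ + (Th (i+1) - Th i) := by
      intro i hi
      have : ¬ i < k := not_lt.mpr (mem_Ico.mp hi).1
      simp [hμ, this]
    rw [h1, sum_congr rfl h2, sum_add_distrib, sum_const, Nat.card_Ico,
      sum_Ico_eq_sub (fun i => Th (i+1) - Th i) hl, htel l, htel k, FThk]
    have hcast : ((l - k : ℕ) : ℝ) = (l:ℝ) - k := by
      push_cast [Nat.cast_sub hl]; ring
    rw [nsmul_eq_mul, hcast]
    ring
  refine ⟨μ, ?_, ?_, ?_, ?_⟩
  · intro l hl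
    rcases le_or_gt l k with hlk | hkl
    · rw [hSμhead l hlk]
      have := H1 l hlk
      linarith
    · have hkl' : k ≤ l := le_of_lt hkl
      rw [hSμtail l hkl']
      have h1 : a l ≤ T l := FT_ge l hl
      have h2 : T l ≤ Th l := by rw [hThdef]; exact le_max_left _ _
      have h3 : a l = (∑ i ∈ range l, α i) - Sβk - δ * l := rfl
      linarith
  · rw [hSμtail n (le_of_lt hkn), FThn]
    simp only [ha]
    ring
  · intro i hik
    simp only [hμ, if_pos hik]
    rw [add_sub_cancel_left, abs_of_nonneg hδ0]
    linarith
  · intro i hik hin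
    have hnotlt : ¬ i < k := not_lt.mpr hik
    simp only [hμ, if_neg hnotlt]
    have h1 := FTh_ub i hin
    have h2 := FTh_lb i hin
    rw [abs_le]
    constructor <;> linarith

noncomputable def sortedDesc {n : ℕ} (f : Fin n → ℝ) : Fin n → ℝ :=
  fun i => f (Tuple.sort f i.rev)

lemma sortedDesc_antitone {n : ℕ} (f : Fin n → ℝ) : Antitone (sortedDesc f) := by
  intro i j hij
  exact Tuple.monotone_sort f (Fin.rev_le_rev.mpr hij)

lemma sortedDesc_comp_perm {n : ℕ} (f : Fin n → ℝ) :
    ∃ q : Equiv.Perm (Fin n), ∀ i, f i = sortedDesc f (q i) := by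
  refine ⟨((Tuple.sort f).symm.trans Fin.revPerm), fun i => ?_⟩
  simp [sortedDesc, Fin.revPerm]

-- sum over a finset of given card is at most sum over initial segment, for antitone g
lemma antitone_sum_le_prefix {n : ℕ} (g : Fin n → ℝ) (hg : Antitone g)
    (s : Finset (Fin n)) (l : Fin n) (hcard : s.card = l.val + 1) :
    ∑ i ∈ s, g i ≤ ∑ i ∈ Iic l, g i := by
  have hl1n : l.val + 1 ≤ n := l.isLt
  set e := s.orderIsoOfFin hcard with he
  have hstrict : StrictMono (fun j : Fin (l.val + 1) => ((e j : Fin n))) := by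
    intro x y hxy
    exact Subtype.coe_lt_coe.mpr (e.strictMono hxy)
  have hval : ∀ m (hm : m < l.val + 1), m ≤ ((e ⟨m, hm⟩ : Fin n) : ℕ) := by
    intro m
    induction m with
    | zero => intro hm; exact Nat.zero_le _
    | succ p ih =>
      intro hm
      have hp : p < l.val + 1 := Nat.lt_of_succ_lt hm
      have h1 := ih hp
      have h2 : ((e ⟨p, hp⟩ : Fin n) : ℕ) < ((e ⟨p+1, hm⟩ : Fin n) : ℕ) := by
        have : (⟨p, hp⟩ : Fin (l.val+1)) < ⟨p+1, hm⟩ := by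
          simp [Fin.lt_def]
        exact hstrict this
      omega
  have h1 : ∑ i ∈ s, g i = ∑ j : Fin (l.val + 1), g (e j) := by
    rw [← Finset.sum_coe_sort s g]
    exact (Equiv.sum_comp e.toEquiv (fun x => g x)).symm
  have h2 : ∀ j : Fin (l.val + 1), g (e j) ≤ g (⟨j.val, lt_of_lt_of_le j.isLt hl1n⟩ : Fin n) := by
    intro j
    apply hg
    rw [Fin.le_def]
    exact hval j.val j.isLt
  have hIic : Iic l = Finset.map (Fin.castLEEmb hl1n) univ := by
    ext i
    simp only [Finset.mem_map, Finset.mem_univ, true_and, Finset.mem_Iic]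
    constructor
    · intro hi
      exact ⟨⟨i.val, Nat.lt_succ_of_le (Fin.le_def.mp hi)⟩, by simp [Fin.castLEEmb, Fin.ext_iff]⟩
    · rintro ⟨j, rfl⟩
      simpa [Fin.castLEEmb, Fin.le_def] using Nat.lt_succ_iff.mp j.isLt
  have h3 : ∑ i ∈ Iic l, g i = ∑ j : Fin (l.val + 1), g (⟨j.val, lt_of_lt_of_le j.isLt hl1n⟩ : Fin n) := by
    rw [hIic, Finset.sum_map]
    rfl
  calc ∑ i ∈ s, g i = ∑ j : Fin (l.val + 1), g (e j) := h1
    _ ≤ ∑ j : Fin (l.val + 1), g (⟨j.val, lt_of_lt_of_le j.isLt hl1n⟩ : Fin n) :=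
        Finset.sum_le_sum (fun j _ => h2 j)
    _ = ∑ i ∈ Iic l, g i := h3.symm


lemma map_univ_perm {n : ℕ} (f : Fin n → ℝ) (σ : Equiv.Perm (Fin n)) :
    Multiset.map (f ∘ σ) Finset.univ.val = Multiset.map f Finset.univ.val := by
  have h : Multiset.map (⇑σ) Finset.univ.val = Finset.univ.val := by
    have := congrArg Finset.val (Finset.map_univ_equiv σ)
    simpa [Finset.map_val] using this
  conv_rhs => rw [← h]
  rw [Multiset.map_map]

lemma ofFn_coe_multiset {n : ℕ} (f : Fin n → ℝ) :
    ((List.ofFn f : List ℝ) : Multiset ℝ) = Multiset.map f Finset.univ.val := by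
  rw [List.ofFn_eq_map]
  have : (Finset.univ : Finset (Fin n)).val = ↑(List.finRange n) := by
    simp [Finset.univ, Fintype.elems, List.finRange]
  rw [this]
  simp [Multiset.map_coe]

lemma sorted_eq_of_multiset_eq {n : ℕ} (f g : Fin n → ℝ)
    (h : Multiset.map f Finset.univ.val = Multiset.map g Finset.univ.val) :
    f ∘ (Tuple.sort f) = g ∘ (Tuple.sort g) := by
  apply List.ofFn_injective
  refine (fun h1 h2 h3 => List.Perm.eq_of_sortedLE h2 h3 h1) ?_ ?_ ?_
  · rw [← Multiset.coe_eq_coe, ofFn_coe_multiset, ofFn_coe_multiset]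
    rw [map_univ_perm f (Tuple.sort f), map_univ_perm g (Tuple.sort g), h]
  · exact List.sortedLE_ofFn_iff.mpr (Tuple.monotone_sort f)
  · exact List.sortedLE_ofFn_iff.mpr (Tuple.monotone_sort g)

lemma sortedDesc_eq_of_multiset_eq {n : ℕ} (f g : Fin n → ℝ)
    (h : Multiset.map f Finset.univ.val = Multiset.map g Finset.univ.val) :
    sortedDesc f = sortedDesc g := by
  funext i
  exact congrFun (sorted_eq_of_multiset_eq f g h) i.rev

lemma sum_sortedDesc {n : ℕ} (f : Fin n → ℝ) : ∑ i, sortedDesc f i = ∑ i, f i := by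
  unfold sortedDesc
  rw [← Equiv.sum_comp ((Tuple.sort f).symm.trans Fin.revPerm) (fun i => f (Tuple.sort f i.rev))]
  apply Finset.sum_congr rfl
  intro i _
  simp [Fin.revPerm]


lemma charpoly_conj_unitary {n : ℕ} (U M : Matrix (Fin n) (Fin n) ℂ) (h1 : U * star U = 1) :
    (U * M * star U).charpoly = M.charpoly := by
  classical
  have h2 : star U * U = 1 := mul_eq_one_comm.mp h1
  set V := (Polynomial.C : ℂ →+* ℂ[X]).mapMatrix U with hV
  set W := (Polynomial.C : ℂ →+* ℂ[X]).mapMatrix (star U) with hW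
  have hVW : V * W = 1 := by rw [hV, hW, ← map_mul, h1, map_one]
  have hWV : W * V = 1 := by rw [hV, hW, ← map_mul, h2, map_one]
  have hchar : Matrix.charmatrix (U * M * star U) = V * Matrix.charmatrix M * W := by
    rw [Matrix.charmatrix, Matrix.charmatrix]
    rw [Matrix.mul_sub, Matrix.sub_mul]
    congr 1
    · -- V * scalar * W = scalar
      have hc : Commute (Matrix.scalar (Fin n) (X : ℂ[X])) V :=
        Matrix.scalar_commute _ (fun r' => Commute.all _ _) _
      calc (Matrix.scalar (Fin n)) (X : ℂ[X]) = V * W * (Matrix.scalar (Fin n)) X := by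
            rw [hVW, one_mul]
        _ = V * ((Matrix.scalar (Fin n)) X * W) := by
            rw [mul_assoc]
            exact congrArg (V * ·) (Matrix.scalar_commute (X : ℂ[X]) (fun r' => Commute.all _ _) W).symm.eq
        _ = V * (Matrix.scalar (Fin n)) X * W := (mul_assoc _ _ _).symm
    · rw [map_mul, map_mul]
  rw [Matrix.charpoly, Matrix.charpoly, hchar]
  rw [Matrix.det_mul, Matrix.det_mul]
  have : V.det * W.det = 1 := by rw [← Matrix.det_mul, hVW, Matrix.det_one]
  ring_nf
  rw [mul_comm V.det _, mul_assoc]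
  rw [this, mul_one]

lemma isHermitian_conj_diag {n : ℕ} (U : Matrix (Fin n) (Fin n) ℂ) (ν : Fin n → ℝ) :
    (U * Matrix.diagonal (fun i => (ν i : ℂ)) * star U).IsHermitian := by
  unfold Matrix.IsHermitian
  rw [Matrix.conjTranspose_mul, Matrix.conjTranspose_mul, Matrix.diagonal_conjTranspose]
  rw [← Matrix.star_eq_conjTranspose, ← Matrix.star_eq_conjTranspose, star_star]
  have : star (fun i => (ν i : ℂ)) = fun i => (ν i : ℂ) := by
    funext i
    simp [Pi.star_apply, Complex.conj_ofReal]
  rw [this, mul_assoc]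

lemma charpoly_prod_isHermitian {n : ℕ} {P : Matrix (Fin n) (Fin n) ℂ} (hP : P.IsHermitian) :
    P.charpoly = ∏ i, (X - Polynomial.C ((hP.eigenvalues i : ℝ) : ℂ)) := by
  conv_lhs => rw [hP.spectral_theorem]
  rw [Unitary.conjStarAlgAut_apply]
  rw [charpoly_conj_unitary _ _
    (Matrix.mem_unitaryGroup_iff.mp (hP.eigenvectorUnitary).2)]
  rw [Matrix.charpoly_of_upperTriangular _ (Matrix.blockTriangular_diagonal _)]
  congr 1
  funext i
  rw [Matrix.diagonal_apply_eq]
  norm_num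

lemma charpoly_prod_diag_conj {n : ℕ} (U : Matrix (Fin n) (Fin n) ℂ) (hU : U * star U = 1)
    (ν : Fin n → ℝ) :
    (U * Matrix.diagonal (fun i => (ν i : ℂ)) * star U).charpoly
      = ∏ i, (X - Polynomial.C ((ν i : ℝ) : ℂ)) := by
  rw [charpoly_conj_unitary _ _ hU]
  rw [Matrix.charpoly_of_upperTriangular _ (Matrix.blockTriangular_diagonal _)]
  congr 1
  funext i
  rw [Matrix.diagonal_apply_eq]

lemma multiset_eq_of_prod_X_sub_C {n : ℕ} (v w : Fin n → ℂ)
    (h : ∏ i, (X - Polynomial.C (v i)) = ∏ i, (X - Polynomial.C (w i))) :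
    Multiset.map v Finset.univ.val = Multiset.map w Finset.univ.val := by
  have key : ∀ u : Fin n → ℂ, ∏ i, (X - Polynomial.C (u i))
      = (Multiset.map (fun a => X - Polynomial.C a) (Multiset.map u Finset.univ.val)).prod := by
    intro u
    rw [Multiset.map_map]
    rfl
  have := congrArg Polynomial.roots (by rw [key v, key w] at h; exact h :
    (Multiset.map (fun a => X - Polynomial.C a) (Multiset.map v Finset.univ.val)).prod
      = (Multiset.map (fun a => X - Polynomial.C a) (Multiset.map w Finset.univ.val)).prod)
  rwa [Polynomial.roots_multiset_prod_X_sub_C, Polynomial.roots_multiset_prod_X_sub_C] at this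

lemma eigenvalues_multiset_of_unitary_diag {n : ℕ} (U : Matrix (Fin n) (Fin n) ℂ)
    (hU : U * star U = 1) (ν : Fin n → ℝ)
    (h' : Matrix.IsHermitian (U * Matrix.diagonal (fun i => (ν i : ℂ)) * star U)) :
    Multiset.map h'.eigenvalues Finset.univ.val = Multiset.map ν Finset.univ.val := by
  have h1 := charpoly_prod_isHermitian h'
  have h2 := charpoly_prod_diag_conj U hU ν
  have h3 := multiset_eq_of_prod_X_sub_C _ _ (h1.symm.trans h2)
  have h4 : Multiset.map (fun x : ℝ => (x : ℂ)) (Multiset.map h'.eigenvalues Finset.univ.val)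
      = Multiset.map (fun x : ℝ => (x : ℂ)) (Multiset.map ν Finset.univ.val) := by
    rw [Multiset.map_map, Multiset.map_map]
    exact h3
  exact Multiset.map_injective Complex.ofReal_injective h4


lemma l2_opNorm_diagonal_le {n : ℕ} (d : Fin n → ℂ) (c : ℝ) (hc : 0 ≤ c)
    (hd : ∀ i, ‖d i‖ ≤ c) : ‖Matrix.diagonal d‖ ≤ c := by
  rw [Matrix.l2_opNorm_def]
  apply ContinuousLinearMap.opNorm_le_bound _ hc
  intro x
  rw [LinearEquiv.trans_apply, LinearMap.coe_toContinuousLinearMap']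
  rw [Matrix.toEuclideanLin_apply]
  rw [EuclideanSpace.norm_eq, EuclideanSpace.norm_eq x]
  have hcoord : ∀ i, ((WithLp.equiv 2 (Fin n → ℂ)).symm
      ((Matrix.diagonal d).mulVec ((WithLp.equiv 2 (Fin n → ℂ)) x)) : EuclideanSpace ℂ (Fin n)) i
      = d i * x i := by
    intro i
    simp [Matrix.mulVec_diagonal]
  calc √(∑ i, ‖((WithLp.equiv 2 (Fin n → ℂ)).symm
        ((Matrix.diagonal d).mulVec ((WithLp.equiv 2 (Fin n → ℂ)) x)) : EuclideanSpace ℂ (Fin n)) i‖ ^ 2)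
      = √(∑ i, ‖d i * x i‖ ^ 2) := by
        congr 1
        exact Finset.sum_congr rfl (fun i _ => by rw [hcoord i])
    _ ≤ √(∑ i, c ^ 2 * ‖x i‖ ^ 2) := by
        apply Real.sqrt_le_sqrt
        apply Finset.sum_le_sum
        intro i _
        rw [norm_mul, mul_pow]
        apply mul_le_mul_of_nonneg_right _ (sq_nonneg _)
        exact pow_le_pow_left₀ (norm_nonneg _) (hd i) 2
    _ = c * √(∑ i, ‖x i‖ ^ 2) := by
        rw [← Finset.mul_sum, Real.sqrt_mul (sq_nonneg c), Real.sqrt_sq hc]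


lemma integral_eigFun {n : ℕ} (hn : 1 ≤ n) {C : Matrix (Fin n) (Fin n) ℂ} (hC : C.IsHermitian)
    (l : ℕ) (hl : l ≤ n) :
    ∫ s in (0:ℝ)..((l:ℝ)/n), eigFun hC s
      = (∑ i ∈ Finset.range l, (if h : i < n then sortedEigs hC ⟨i,h⟩ else 0)) / n := by
  have hn0 : (0:ℝ) < n := by exact_mod_cast hn
  set g : ℕ → ℝ := fun i => (i:ℝ) / n with hg
  have hgdef : ∀ i : ℕ, g i = (i:ℝ) / n := fun _ => rfl
  have hgle : ∀ i : ℕ, g i ≤ g (i+1) := by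
    intro i
    rw [hgdef, hgdef]
    push_cast
    gcongr
    linarith
  -- value of eigFun on the open piece
  have hval : ∀ i, (hin : i < n) → ∀ s, g i < s → s < g (i+1) → eigFun hC s = sortedEigs hC ⟨i, hin⟩ := by
    intro i hin s hs1 hs2
    have h1 : (i:ℝ) < (n:ℝ) * s := by
      rw [hgdef] at hs1
      calc (i:ℝ) = n * ((i:ℝ)/n) := by field_simp
        _ < n * s := by exact mul_lt_mul_of_pos_left hs1 hn0
    have h2 : (n:ℝ) * s < (i:ℝ) + 1 := by
      rw [hgdef] at hs2
      calc (n:ℝ) * s < n * (((i:ℕ)+1:ℕ):ℝ)/n := by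
            rw [mul_div_assoc]
            exact mul_lt_mul_of_pos_left hs2 hn0
        _ = (i:ℝ) + 1 := by field_simp; push_cast; ring
    have hfloor : ⌊(n:ℝ) * s⌋ = (i:ℤ) := by
      rw [Int.floor_eq_iff]
      constructor
      · push_cast; linarith
      · push_cast; linarith
    unfold eigFun
    rw [hfloor]
    simp [hin]
  -- a.e. equality on each piece
  have hae : ∀ i, (hin : i < n) → ∀ᵐ s ∂(volume : Measure ℝ),
      s ∈ Set.uIoc (g i) (g (i+1)) → eigFun hC s = sortedEigs hC ⟨i, hin⟩ := by
    intro i hin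
    have hne : ∀ᵐ s ∂(volume : Measure ℝ), s ≠ g (i+1) := by
      rw [ae_iff]
      have : {a : ℝ | ¬ a ≠ g (i+1)} = {g (i+1)} := by ext a; simp
      rw [this]
      exact measure_singleton _
    filter_upwards [hne] with s hs hmem
    rw [Set.uIoc_of_le (hgle i)] at hmem
    exact hval i hin s hmem.1 (lt_of_le_of_ne hmem.2 hs)
  have hint : ∀ i, i < n → IntervalIntegrable (eigFun hC) volume (g i) (g (i+1)) := by
    intro i hin
    rw [intervalIntegrable_iff]
    apply MeasureTheory.Integrable.congr
      (integrableOn_const measure_Ioc_lt_top.ne :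
        IntegrableOn (fun _ => sortedEigs hC ⟨i, hin⟩) (Set.uIoc (g i) (g (i+1))) volume)
    rw [Filter.EventuallyEq, ae_restrict_iff' measurableSet_uIoc]
    filter_upwards [hae i hin] with s hs hmem
    exact (hs hmem).symm
  have hpieceval : ∀ i, i < n →
      ∀ (hin : i < n), (∫ s in (g i)..(g (i+1)), eigFun hC s) = sortedEigs hC ⟨i, hin⟩ / n := by
    intro i _ hin
    rw [intervalIntegral.integral_congr_ae (hae i hin), intervalIntegral.integral_const]
    rw [hgdef, hgdef, smul_eq_mul]
    field_simp; push_cast; ring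
  have h0 : g 0 = 0 := by rw [hgdef]; simp
  have hmain := intervalIntegral.sum_integral_adjacent_intervals
    (f := eigFun hC) (μ := volume) (a := g) (n := l) (fun i hi => hint i (lt_of_lt_of_le hi hl))
  rw [h0] at hmain
  rw [hgdef] at hmain
  rw [← hmain]
  rw [Finset.sum_div]
  apply Finset.sum_congr rfl
  intro i hi
  have hin : i < n := lt_of_lt_of_le (Finset.mem_range.mp hi) hl
  rw [hpieceval i hin hin]
  rw [dif_pos hin]


lemma trace_re_eq_sum_eig {n : ℕ} {C : Matrix (Fin n) (Fin n) ℂ} (hC : C.IsHermitian) :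
    (Matrix.trace C).re = ∑ i, hC.eigenvalues i := by
  conv_lhs => rw [hC.spectral_theorem]
  rw [Unitary.conjStarAlgAut_apply]
  rw [Matrix.trace_mul_cycle]
  rw [Matrix.mem_unitaryGroup_iff'.mp hC.eigenvectorUnitary.2, one_mul, Matrix.trace_diagonal]
  simp

lemma sum_sortedEigs {n : ℕ} {C : Matrix (Fin n) (Fin n) ℂ} (hC : C.IsHermitian) :
    ∑ i, sortedEigs hC i = ∑ i, hC.eigenvalues i :=
  Equiv.sum_comp (Fin.revPerm.trans (Tuple.sort hC.eigenvalues)) hC.eigenvalues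

lemma sortedEigs_nonneg {n : ℕ} {B : Matrix (Fin n) (Fin n) ℂ} (hB : B.PosSemidef) (j : Fin n) :
    0 ≤ sortedEigs hB.isHermitian j :=
  hB.eigenvalues_nonneg _

lemma sortedEigs_antitone {n : ℕ} {C : Matrix (Fin n) (Fin n) ℂ} (hC : C.IsHermitian) :
    Antitone (sortedEigs hC) := by
  intro i j hij
  exact Tuple.monotone_sort hC.eigenvalues (Fin.rev_le_rev.mpr hij)

lemma sortedEigs_eq_zero {n : ℕ} {B : Matrix (Fin n) (Fin n) ℂ} (hB : B.PosSemidef) (j : Fin n)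
    (hj : B.rank ≤ j.val) : sortedEigs hB.isHermitian j = 0 := by
  classical
  by_contra h
  have hpos : ∀ i : Fin n, i ≤ j → sortedEigs hB.isHermitian i ≠ 0 := by
    intro i hij
    have h1 : 0 < sortedEigs hB.isHermitian j :=
      lt_of_le_of_ne (sortedEigs_nonneg hB j) (Ne.symm h)
    have h2 := sortedEigs_antitone hB.isHermitian hij
    exact ne_of_gt (lt_of_lt_of_le h1 h2)
  have hsub : Finset.Iic j ⊆ Finset.univ.filter (fun i => sortedEigs hB.isHermitian i ≠ 0) := by
    intro i hi
    exact Finset.mem_filter.mpr ⟨Finset.mem_univ _, hpos i (Finset.mem_Iic.mp hi)⟩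
  have hcard : j.val + 1 ≤ (Finset.univ.filter (fun i => sortedEigs hB.isHermitian i ≠ 0)).card := by
    rw [← Fin.card_Iic j]
    exact Finset.card_le_card hsub
  have hcardeq : (Finset.univ.filter (fun i => sortedEigs hB.isHermitian i ≠ 0)).card
      = B.rank := by
    rw [hB.isHermitian.rank_eq_card_non_zero_eigs]
    rw [← Fintype.card_subtype]
    exact Fintype.card_congr ((Fin.revPerm.trans (Tuple.sort hB.isHermitian.eigenvalues)).subtypeEquiv
      (fun a => Iff.rfl))
  omega

end Aux

section Aux2
open Finset

lemma sum_Iic_eq_range' {n : ℕ} (f : Fin n → ℝ) (g : ℕ → ℝ)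
    (hg : ∀ i (h : i < n), g i = f ⟨i, h⟩) (l : Fin n) :
    ∑ i ∈ Finset.Iic l, f i = ∑ i ∈ Finset.range (l.val + 1), g i := by
  have hl1n : l.val + 1 ≤ n := l.isLt
  have hIic : Finset.Iic l = Finset.map (Fin.castLEEmb hl1n) univ := by
    ext i
    simp only [Finset.mem_map, Finset.mem_univ, true_and, Finset.mem_Iic]
    constructor
    · intro hi
      exact ⟨⟨i.val, Nat.lt_succ_of_le (Fin.le_def.mp hi)⟩, by simp [Fin.castLEEmb, Fin.ext_iff]⟩
    · rintro ⟨j, rfl⟩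
      simpa [Fin.castLEEmb, Fin.le_def] using Nat.lt_succ_iff.mp j.isLt
  rw [hIic, Finset.sum_map, ← Fin.sum_univ_eq_sum_range g (l.val + 1)]
  apply Finset.sum_congr rfl
  intro j _
  rw [hg j.val (lt_of_lt_of_le j.isLt hl1n)]
  rfl

lemma sum_univ_eq_range' {n : ℕ} (f : Fin n → ℝ) (g : ℕ → ℝ)
    (hg : ∀ i (h : i < n), g i = f ⟨i, h⟩) :
    ∑ i : Fin n, f i = ∑ i ∈ Finset.range n, g i := by
  rw [← Fin.sum_univ_eq_sum_range g n]
  apply Finset.sum_congr rfl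
  intro j _
  rw [hg j.val j.isLt]

lemma prefix_le_sortedDesc_prefix {n : ℕ} (f : Fin n → ℝ) (l : Fin n) :
    ∑ i ∈ Finset.Iic l, f i ≤ ∑ i ∈ Finset.Iic l, sortedDesc f i := by
  obtain ⟨q, hq⟩ := sortedDesc_comp_perm f
  calc ∑ i ∈ Finset.Iic l, f i = ∑ i ∈ Finset.Iic l, sortedDesc f (q i) :=
        Finset.sum_congr rfl (fun i _ => hq i)
    _ = ∑ j ∈ (Finset.Iic l).image q, sortedDesc f j :=
        (Finset.sum_image (fun a _ b _ h => q.injective h)).symm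
    _ ≤ ∑ i ∈ Finset.Iic l, sortedDesc f i := by
        apply antitone_sum_le_prefix _ (sortedDesc_antitone f) _ l
        rw [Finset.card_image_of_injective _ q.injective, Fin.card_Iic]

end Aux2


open Finset

theorem stmt2 (ε r : ℝ) (hε : 0 < ε) (hr : r ∈ Set.Ioo (0 : ℝ) 1)
    (n : ℕ) (hn : 1 ≤ n) (A B : Matrix (Fin n) (Fin n) ℂ)
    (hA : A.PosSemidef) (hB : B.PosSemidef)
    -- (i) the normalized trace of the projection onto `ker B` is `1 - rank B / n ≥ r`
    (hker : r ≤ 1 - (B.rank : ℝ) / n)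
    -- (ii) `tr B ≤ tr A + δ` with `δ = min (ε/3) (ε*r/4)`
    (htr : ntr B ≤ ntr A + min (ε / 3) (ε * r / 4))
    -- (iii)
    (h3 : ∀ t ∈ Set.Icc (0 : ℝ) ((B.rank : ℝ) / n),
      (∫ s in (0 : ℝ)..t, eigFun hA.isHermitian s) ≤
        min (ε / 3) (ε * r / 4) * t + ∫ s in (0 : ℝ)..t, eigFun hB.isHermitian s)
    -- (iv)
    (h4 : ∀ t ∈ Set.Icc ((B.rank : ℝ) / n) 1,
      (∫ s in (0 : ℝ)..t, eigFun hA.isHermitian s) ≤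
        min (ε / 3) (ε * r / 4) * t + ε * (t - (B.rank : ℝ) / n) +
          ∫ s in (0 : ℝ)..t, eigFun hB.isHermitian s) :
    ∃ (B' : Matrix (Fin n) (Fin n) ℂ) (hB' : B'.IsHermitian),
      ‖B' - B‖ < 2 * ε ∧ Maj hA.isHermitian hB' := by
  have hr0 := hr.1
  set δ := min (ε / 3) (ε * r / 4) with hδ
  have hδ0 : (0:ℝ) ≤ δ := le_min (by linarith) (by nlinarith)
  have hδε : δ < ε := lt_of_le_of_lt (min_le_left _ _) (by linarith)
  have hδr : δ ≤ ε * r / 4 := min_le_right _ _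
  set k := B.rank with hk
  have hn0 : (0:ℝ) < n := by exact_mod_cast hn
  have hrn : r * n ≤ (n:ℝ) - k := by
    have h1 : r * n ≤ (1 - (k:ℝ)/n) * n := by nlinarith
    calc r * n ≤ (1 - (k:ℝ)/n) * n := h1
      _ = (n:ℝ) - k := by field_simp
  have hkn : k < n := by
    have h2 : (0:ℝ) < r * n := mul_pos hr0 hn0
    have : (k:ℝ) < n := by linarith
    exact_mod_cast this
  have hnum : 2 * (δ * n) ≤ ε * ((n:ℝ) - k) := by
    have h1 : 2 * (δ * n) ≤ 2 * ((ε * r / 4) * n) := by nlinarith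
    have h2 : ε * (r * n) ≤ ε * ((n:ℝ) - k) := mul_le_mul_of_nonneg_left hrn hε.le
    nlinarith
  set αp : ℕ → ℝ := fun i => if h : i < n then sortedEigs hA.isHermitian ⟨i, h⟩ else 0 with hαp
  set βp : ℕ → ℝ := fun i => if h : i < n then sortedEigs hB.isHermitian ⟨i, h⟩ else 0 with hβp
  have hαpeq : ∀ i (h : i < n), αp i = sortedEigs hA.isHermitian ⟨i, h⟩ := fun i h => dif_pos h
  have hβpeq : ∀ i (h : i < n), βp i = sortedEigs hB.isHermitian ⟨i, h⟩ := fun i h => dif_pos h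
  have hβzero : ∀ i, k ≤ i → βp i = 0 := by
    intro i hi
    by_cases h : i < n
    · rw [hβpeq i h]
      exact sortedEigs_eq_zero hB ⟨i, h⟩ hi
    · simp [hβp, h]
  have hSβconst : ∀ l, k ≤ l → ∑ i ∈ range l, βp i = ∑ i ∈ range k, βp i := by
    intro l hl
    rw [← Finset.sum_range_add_sum_Ico βp hl]
    have hz : ∑ i ∈ Finset.Ico k l, βp i = 0 :=
      Finset.sum_eq_zero (fun i hi => hβzero i (Finset.mem_Ico.mp hi).1)
    rw [hz, add_zero]
  have hα0 : ∀ l < n, 0 ≤ αp l := by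
    intro l hl
    rw [hαpeq l hl]
    exact sortedEigs_nonneg hA _
  have hintA : ∀ l, l ≤ n → (∫ s in (0:ℝ)..((l:ℝ)/n), eigFun hA.isHermitian s)
      = (∑ i ∈ range l, αp i) / n := fun l hl => integral_eigFun hn hA.isHermitian l hl
  have hintB : ∀ l, l ≤ n → (∫ s in (0:ℝ)..((l:ℝ)/n), eigFun hB.isHermitian s)
      = (∑ i ∈ range l, βp i) / n := fun l hl => integral_eigFun hn hB.isHermitian l hl
  have H1 : ∀ l ≤ k, ∑ i ∈ range l, αp i ≤ δ * l + ∑ i ∈ range l, βp i := by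
    intro l hl
    have hln : l ≤ n := le_trans hl hkn.le
    have hmem : ((l:ℝ)/n) ∈ Set.Icc (0:ℝ) ((k:ℝ)/n) := by
      constructor
      · positivity
      · gcongr
    have h := h3 _ hmem
    rw [hintA l hln, hintB l hln] at h
    have h2 := mul_le_mul_of_nonneg_right h hn0.le
    rw [div_mul_cancel₀ _ (ne_of_gt hn0), add_mul, div_mul_cancel₀ _ (ne_of_gt hn0)] at h2
    have h5 : δ * ((l:ℝ)/n) * n = δ * l := by field_simp
    linarith
  have H2 : ∀ l, k ≤ l → l ≤ n →
      ∑ i ∈ range l, αp i ≤ δ * l + ε * ((l:ℝ) - k) + ∑ i ∈ range k, βp i := by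
    intro l hlk hln
    have hmem : ((l:ℝ)/n) ∈ Set.Icc ((k:ℝ)/n) (1:ℝ) := by
      constructor
      · gcongr
      · rw [div_le_one hn0]
        exact_mod_cast hln
    have h := h4 _ hmem
    rw [hintA l hln, hintB l hln, hSβconst l hlk] at h
    have h2 := mul_le_mul_of_nonneg_right h hn0.le
    rw [div_mul_cancel₀ _ (ne_of_gt hn0), add_mul, add_mul, div_mul_cancel₀ _ (ne_of_gt hn0)] at h2
    have h5 : δ * ((l:ℝ)/n) * n = δ * l := by field_simp
    have h6 : ε * ((l:ℝ)/n - (k:ℝ)/n) * n = ε * ((l:ℝ) - k) := by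
      field_simp
    linarith
  have hntrB : ntr B = (∑ i ∈ range n, βp i) / n := by
    unfold ntr
    rw [trace_re_eq_sum_eig hB.isHermitian]
    congr 1
    rw [← sum_sortedEigs hB.isHermitian]
    exact sum_univ_eq_range' _ βp hβpeq
  have hntrA : ntr A = (∑ i ∈ range n, αp i) / n := by
    unfold ntr
    rw [trace_re_eq_sum_eig hA.isHermitian]
    congr 1
    rw [← sum_sortedEigs hA.isHermitian]
    exact sum_univ_eq_range' _ αp hαpeq
  have H3 : ∑ i ∈ range k, βp i ≤ ∑ i ∈ range n, αp i + δ * n := by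
    rw [hntrB, hntrA] at htr
    have h2 := mul_le_mul_of_nonneg_right htr hn0.le
    rw [div_mul_cancel₀ _ (ne_of_gt hn0), add_mul, div_mul_cancel₀ _ (ne_of_gt hn0)] at h2
    rw [← hSβconst n hkn.le]
    linarith
  obtain ⟨μ, hM1, hM2, hN1, hN2⟩ := discrete_core n k ε δ αp βp hkn hδ0 hδε hnum hα0 H1 H2 H3
  set μF : Fin n → ℝ := fun j => μ j.val with hμF
  have hμFeq : ∀ i (h : i < n), μ i = μF ⟨i, h⟩ := fun i h => rfl
  set τ : Equiv.Perm (Fin n) := Fin.revPerm.trans (Tuple.sort hB.isHermitian.eigenvalues) with hτ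
  have hτeig : ∀ j, hB.isHermitian.eigenvalues (τ j) = sortedEigs hB.isHermitian j := fun j => rfl
  set ν : Fin n → ℝ := fun i => μF (τ.symm i) with hν
  set U : Matrix (Fin n) (Fin n) ℂ :=
    (hB.isHermitian.eigenvectorUnitary : Matrix (Fin n) (Fin n) ℂ) with hUdef
  have hUU : U * star U = 1 :=
    Matrix.mem_unitaryGroup_iff.mp hB.isHermitian.eigenvectorUnitary.2
  set B' := U * Matrix.diagonal (fun i => (ν i : ℂ)) * star U with hB'def
  have hB' : B'.IsHermitian := isHermitian_conj_diag U ν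
  have hnormbound : ∀ j : Fin n, |μF j - sortedEigs hB.isHermitian j| ≤ δ + ε := by
    intro j
    rcases lt_or_ge j.val k with hj | hj
    · have := hN1 j.val hj
      rw [hβpeq j.val j.isLt] at this
      simpa using this
    · have h1 := hN2 j.val hj j.isLt
      have h2 : sortedEigs hB.isHermitian j = 0 := sortedEigs_eq_zero hB j hj
      rw [h2, sub_zero]
      exact h1
  refine ⟨B', hB', ?_, ?_⟩
  · -- norm bound
    have hBspec : B = U * Matrix.diagonal
        (fun i => RCLike.ofReal (hB.isHermitian.eigenvalues i) : Fin n → ℂ) * star U :=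
      hB.isHermitian.spectral_theorem
    have hdiff : B' - B = U * (Matrix.diagonal
        (fun i => (ν i : ℂ) - RCLike.ofReal (hB.isHermitian.eigenvalues i))) * star U := by
      rw [← Matrix.diagonal_sub, Matrix.mul_sub, Matrix.sub_mul, hB'def, ← hBspec]
    rw [hdiff]
    have hnorm1 : ‖U * (Matrix.diagonal
        (fun i => (ν i : ℂ) - RCLike.ofReal (hB.isHermitian.eigenvalues i))) * star U‖
        = ‖Matrix.diagonal
        (fun i => (ν i : ℂ) - RCLike.ofReal (hB.isHermitian.eigenvalues i))‖ := by
      rw [hUdef, mul_assoc]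
      rw [CStarRing.norm_coe_unitary_mul hB.isHermitian.eigenvectorUnitary _]
      rw [← Unitary.coe_star]
      exact CStarRing.norm_mul_coe_unitary _ _
    rw [hnorm1]
    have hle : ‖Matrix.diagonal
        (fun i => (ν i : ℂ) - RCLike.ofReal (hB.isHermitian.eigenvalues i))‖ ≤ δ + ε := by
      apply l2_opNorm_diagonal_le _ _ (by linarith)
      intro i
      have hi : (ν i : ℂ) - RCLike.ofReal (hB.isHermitian.eigenvalues i)
          = ((ν i - hB.isHermitian.eigenvalues i : ℝ) : ℂ) := by
        push_cast
        rfl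
      rw [hi, Complex.norm_real]
      have : ν i = μF (τ.symm i) := rfl
      have heig : hB.isHermitian.eigenvalues i = sortedEigs hB.isHermitian (τ.symm i) := by
        rw [← hτeig (τ.symm i), Equiv.apply_symm_apply]
      rw [this, heig]
      exact hnormbound (τ.symm i)
    calc ‖Matrix.diagonal (fun i => (ν i : ℂ) - RCLike.ofReal (hB.isHermitian.eigenvalues i))‖
        ≤ δ + ε := hle
      _ < 2 * ε := by linarith
  · -- majorization
    have hms : Multiset.map hB'.eigenvalues Finset.univ.val = Multiset.map μF Finset.univ.val := by
      have h1 := eigenvalues_multiset_of_unitary_diag U hUU ν hB'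
      rw [h1]
      exact map_univ_perm μF τ.symm
    have hsortB' : sortedEigs hB' = sortedDesc μF := by
      have h0 : sortedEigs hB' = sortedDesc hB'.eigenvalues := rfl
      rw [h0]
      exact sortedDesc_eq_of_multiset_eq _ _ hms
    constructor
    · intro l
      rw [hsortB']
      rw [sum_Iic_eq_range' (sortedEigs hA.isHermitian) αp hαpeq l]
      have h1 : ∑ i ∈ Finset.Iic l, μF i ≤ ∑ i ∈ Finset.Iic l, sortedDesc μF i :=
        prefix_le_sortedDesc_prefix μF l
      have h2 : ∑ i ∈ Finset.Iic l, μF i = ∑ i ∈ range (l.val + 1), μ i :=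
        sum_Iic_eq_range' μF μ hμFeq l
      have h3' := hM1 (l.val + 1) l.isLt
      linarith
    · rw [hsortB', sum_sortedDesc]
      rw [sum_univ_eq_range' (sortedEigs hA.isHermitian) αp hαpeq]
      rw [sum_univ_eq_range' μF μ hμFeq]
      exact hM2.symm
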